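/- Let (X, 𝒰, ∫) be a Daniell space. If f ∈ 𝒰*, then for every ε > 0 there exists a sequence of functions f_1, f_2, … ∈ 𝒰 such that f ≃ ∑ f_n and ∑_{n=1}^∞ ∫|f_n| ≤ ∫|f| + ε. -/

import Mathlib

open Filter Topology

/-- A Daniell space: a Riesz space `U` of real-valued functions on `X` together with a
positive linear functional `integral` satisfying the Daniell continuity condition (II). -/
structure DaniellSpace (X : Type*) where
  U : Set (X → ℝ)
  integral : (X → ℝ) → ℝ
  zero_mem : (0 : X → ℝ) ∈ U
  add_mem : ∀ {f g : X → ℝ}, f ∈ U → g ∈ U → f + g ∈ U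
  smul_mem : ∀ (c : ℝ) {f : X → ℝ}, f ∈ U → c • f ∈ U
  sup_mem : ∀ {f g : X → ℝ}, f ∈ U → g ∈ U → f ⊔ g ∈ U
  inf_mem : ∀ {f g : X → ℝ}, f ∈ U → g ∈ U → f ⊓ g ∈ U
  integral_add : ∀ {f g : X → ℝ}, f ∈ U → g ∈ U →
    integral (f + g) = integral f + integral g
  integral_smul : ∀ (c : ℝ) {f : X → ℝ}, f ∈ U → integral (c • f) = c * integral f
  integral_nonneg : ∀ {f : X → ℝ}, f ∈ U → (∀ x, 0 ≤ f x) → 0 ≤ integral f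
  integral_tendsto_zero : ∀ f : ℕ → X → ℝ, (∀ n, f n ∈ U) → Antitone f →
    (∀ x, Tendsto (fun n => f n x) atTop (𝓝 (0 : ℝ))) →
    Tendsto (fun n => integral (f n)) atTop (𝓝 (0 : ℝ))

/-- `f ≃ ∑ fₙ` : the `fₙ` belong to `U`, `∑ ∫|fₙ| < ∞`, and `f x = ∑ fₙ x` at every
point where the series converges absolutely. -/
def DaniellSpace.Rep {X : Type*} (D : DaniellSpace X) (f : X → ℝ) (fs : ℕ → X → ℝ) : Prop :=
  (∀ n, fs n ∈ D.U) ∧ (Summable fun n => D.integral |fs n|) ∧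
  ∀ x, (Summable fun n => |fs n x|) → HasSum (fun n => fs n x) (f x)

/-- The extension `𝒰*` of `𝒰`. -/
def DaniellSpace.Ustar {X : Type*} (D : DaniellSpace X) : Set (X → ℝ) :=
  {f | ∃ fs, D.Rep f fs}

-- The integral on `𝒰*`: `∫ f = ∑ ∫ fₙ` for any representation `f ≃ ∑ fₙ`
-- (the value is independent of the representation).
open Classical in
noncomputable def DaniellSpace.integralStar {X : Type*} (D : DaniellSpace X)
    (f : X → ℝ) : ℝ :=
  if h : ∃ fs, D.Rep f fs then ∑' n, D.integral (h.choose n) else 0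

/-- A Daniell space is complete if `f ≃ ∑ fₙ` with all `fₙ ∈ 𝒰` implies `f ∈ 𝒰`. -/
def DaniellSpace.Complete {X : Type*} (D : DaniellSpace X) : Prop :=
  ∀ (f : X → ℝ) (fs : ℕ → X → ℝ), D.Rep f fs → f ∈ D.U

/-- A null set: its characteristic function is a null function. -/
def DaniellSpace.NullSet {X : Type*} (D : DaniellSpace X) (S : Set X) : Prop :=
  S.indicator (fun _ => (1 : ℝ)) ∈ D.U ∧ D.integral (S.indicator fun _ => (1 : ℝ)) = 0

section DAux
variable {X : Type*} (D : DaniellSpace X)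

lemma D_neg_mem {f : X → ℝ} (hf : f ∈ D.U) : -f ∈ D.U := by
  simpa [neg_one_smul] using D.smul_mem (-1) hf

lemma D_sub_mem {f g : X → ℝ} (hf : f ∈ D.U) (hg : g ∈ D.U) : f - g ∈ D.U := by
  simpa [sub_eq_add_neg] using D.add_mem hf (D_neg_mem D hg)

lemma D_integral_neg {f : X → ℝ} (hf : f ∈ D.U) : D.integral (-f) = -D.integral f := by
  simpa [neg_one_smul] using D.integral_smul (-1) hf

lemma D_integral_zero : D.integral 0 = 0 := by
  simpa using D.integral_smul 0 D.zero_mem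

lemma D_abs_mem {f : X → ℝ} (hf : f ∈ D.U) : |f| ∈ D.U := by
  have h : |f| = f ⊔ (-f) := by
    funext x; simp [abs_eq_max_neg]
  rw [h]; exact D.sup_mem hf (D_neg_mem D hf)

lemma D_integral_mono {f g : X → ℝ} (hf : f ∈ D.U) (hg : g ∈ D.U) (h : ∀ x, f x ≤ g x) :
    D.integral f ≤ D.integral g := by
  have hsub : g - f ∈ D.U := D_sub_mem D hg hf
  have h0 : 0 ≤ D.integral (g - f) :=
    D.integral_nonneg hsub (fun x => by simpa using sub_nonneg.2 (h x))
  have h1 : D.integral (g - f + f) = D.integral (g - f) + D.integral f :=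
    D.integral_add hsub hf
  rw [sub_add_cancel] at h1
  linarith

lemma D_abs_integral_le {f : X → ℝ} (hf : f ∈ D.U) : |D.integral f| ≤ D.integral |f| := by
  have h1 := D_integral_mono D hf (D_abs_mem D hf) (fun x => le_abs_self _)
  have h2 := D_integral_mono D (D_neg_mem D hf) (D_abs_mem D hf)
    (fun x => by simpa using neg_le_abs (f x))
  rw [D_integral_neg D hf] at h2
  exact abs_le.2 ⟨by linarith, h1⟩

lemma D_sum_mem (fs : ℕ → X → ℝ) (h : ∀ n, fs n ∈ D.U) (k : ℕ) :
    ∑ n ∈ Finset.range k, fs n ∈ D.U := by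
  induction k with
  | zero => simpa using D.zero_mem
  | succ k ih => rw [Finset.sum_range_succ]; exact D.add_mem ih (h k)

lemma D_integral_sum (fs : ℕ → X → ℝ) (h : ∀ n, fs n ∈ D.U) (k : ℕ) :
    D.integral (∑ n ∈ Finset.range k, fs n) = ∑ n ∈ Finset.range k, D.integral (fs n) := by
  induction k with
  | zero => simpa using D_integral_zero D
  | succ k ih =>
      rw [Finset.sum_range_succ, Finset.sum_range_succ,
        D.integral_add (D_sum_mem D fs h k) (h k), ih]

lemma D_integral_le_tsum (g : X → ℝ) (hg : g ∈ D.U) (v : ℕ → X → ℝ) (hv : ∀ n, v n ∈ D.U)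
    (hv0 : ∀ n x, 0 ≤ v n x) (hsum : Summable fun n => D.integral (v n))
    (hle : ∀ x, Summable (fun n => v n x) → g x ≤ ∑' n, v n x) :
    D.integral g ≤ ∑' n, D.integral (v n) := by
  set S : ℕ → X → ℝ := fun k => ∑ n ∈ Finset.range k, v n with hS
  set w : ℕ → X → ℝ := fun k => (g - S k) ⊔ 0 with hw
  have hSU : ∀ k, S k ∈ D.U := fun k => D_sum_mem D v hv k
  have hwU : ∀ k, w k ∈ D.U := fun k => D.sup_mem (D_sub_mem D hg (hSU k)) D.zero_mem
  have hSx : ∀ k x, S k x = ∑ n ∈ Finset.range k, v n x := fun k x => by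
    simp [hS]
  have hwx : ∀ k x, w k x = max (g x - S k x) 0 := fun k x => by
    simp [hw, Pi.sup_apply]
  have hSmono : ∀ x, Monotone (fun k => S k x) := by
    intro x k l hkl
    dsimp only
    rw [hSx, hSx]
    exact Finset.sum_le_sum_of_subset_of_nonneg (Finset.range_subset_range.2 hkl)
      (fun i _ _ => hv0 i x)
  have hwA : Antitone w := by
    intro k l hkl x
    rw [hwx, hwx]
    exact max_le_max (by linarith [hSmono x hkl]) le_rfl
  have hw0 : ∀ x, Tendsto (fun k => w k x) atTop (𝓝 0) := by
    intro x
    by_cases hsx : Summable fun n => v n x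
    · have h1 : Tendsto (fun k => S k x) atTop (𝓝 (∑' n, v n x)) := by
        have := hsx.hasSum.tendsto_sum_nat
        refine this.congr fun k => ?_
        rw [hSx]
      have h2 : Tendsto (fun k => max (g x - S k x) 0) atTop
          (𝓝 (max (g x - ∑' n, v n x) 0)) :=
        (tendsto_const_nhds.sub h1).max tendsto_const_nhds
      have h3 : max (g x - ∑' n, v n x) 0 = 0 := max_eq_right (sub_nonpos.2 (hle x hsx))
      rw [h3] at h2
      exact h2.congr fun k => (hwx k x).symm
    · have h1 : Tendsto (fun k => S k x) atTop atTop := by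
        have := (not_summable_iff_tendsto_nat_atTop_of_nonneg (fun n => hv0 n x)).1 hsx
        refine this.congr fun k => ?_
        rw [hSx]
      have h2 : ∀ᶠ k in atTop, w k x = 0 := by
        filter_upwards [h1.eventually_ge_atTop (g x)] with k hk
        rw [hwx]
        exact max_eq_right (by linarith)
      exact Tendsto.congr' (EventuallyEq.symm h2) tendsto_const_nhds
  have hT : Tendsto (fun k => D.integral (w k)) atTop (𝓝 0) :=
    D.integral_tendsto_zero w hwU hwA hw0
  have hIv : ∀ n, 0 ≤ D.integral (v n) := fun n => D.integral_nonneg (hv n) (hv0 n)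
  have hkey : ∀ k, D.integral g - ∑' n, D.integral (v n) ≤ D.integral (w k) := by
    intro k
    have hptw : ∀ x, g x ≤ (w k + S k) x := by
      intro x
      have : g x - S k x ≤ w k x := by rw [hwx]; exact le_max_left _ _
      simpa [Pi.add_apply] using by linarith
    have h1 : D.integral g ≤ D.integral (w k) + D.integral (S k) := by
      have := D_integral_mono D hg (D.add_mem (hwU k) (hSU k)) hptw
      rwa [D.integral_add (hwU k) (hSU k)] at this
    have h2 : D.integral (S k) = ∑ n ∈ Finset.range k, D.integral (v n) :=
      D_integral_sum D v hv k
    have h3 : ∑ n ∈ Finset.range k, D.integral (v n) ≤ ∑' n, D.integral (v n) :=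
      Summable.sum_le_tsum _ (fun i _ => hIv i) hsum
    linarith
  have := ge_of_tendsto' hT hkey
  linarith

end DAux

section DAux2
variable {X : Type*} (D : DaniellSpace X)

lemma D_integral_summable {fs : ℕ → X → ℝ} (hU : ∀ n, fs n ∈ D.U)
    (habs : Summable fun n => D.integral |fs n|) :
    Summable fun n => D.integral (fs n) := by
  refine Summable.of_norm_bounded habs fun n => ?_
  simpa [Real.norm_eq_abs] using D_abs_integral_le D (hU n)

set_option maxHeartbeats 2000000 in
lemma D_tsum_integral_le (fs gs : ℕ → X → ℝ) (hfU : ∀ n, fs n ∈ D.U) (hgU : ∀ n, gs n ∈ D.U)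
    (hfs : Summable fun n => D.integral |fs n|) (hgs : Summable fun n => D.integral |gs n|)
    (hpt : ∀ x, Summable (fun n => |fs n x|) → Summable (fun n => |gs n x|) →
      ∑' n, gs n x ≤ ∑' n, fs n x) :
    ∑' n, D.integral (gs n) ≤ ∑' n, D.integral (fs n) := by
  have hIf : Summable fun n => D.integral (fs n) := D_integral_summable D hfU hfs
  have hIg : Summable fun n => D.integral (gs n) := D_integral_summable D hgU hgs
  refine le_of_forall_pos_le_add fun ε hε => ?_
  have htf : Tendsto (fun N => ∑' k, D.integral |fs (k + N)|) atTop (𝓝 0) :=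
    tendsto_sum_nat_add fun n => D.integral |fs n|
  have htg : Tendsto (fun N => ∑' k, D.integral |gs (k + N)|) atTop (𝓝 0) :=
    tendsto_sum_nat_add fun n => D.integral |gs n|
  obtain ⟨N, hN1, hN2⟩ :=
    ((htf.eventually_lt_const (by linarith : (0:ℝ) < ε/4)).and
      (htg.eventually_lt_const (by linarith : (0:ℝ) < ε/4))).exists
  set Sf : X → ℝ := ∑ n ∈ Finset.range N, fs n with hSf
  set Sg : X → ℝ := ∑ n ∈ Finset.range N, gs n with hSg
  have hSfU : Sf ∈ D.U := D_sum_mem D fs hfU N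
  have hSgU : Sg ∈ D.U := D_sum_mem D gs hgU N
  set G : X → ℝ := (Sg - Sf) ⊔ 0 with hG
  have hGU : G ∈ D.U := D.sup_mem (D_sub_mem D hSgU hSfU) D.zero_mem
  have hGx : ∀ x, G x = max (Sg x - Sf x) 0 := fun x => by
    simp [hG, Pi.sup_apply]
  set v : ℕ → X → ℝ := fun k => |fs (k + N)| + |gs (k + N)| with hv
  have hvU : ∀ k, v k ∈ D.U := fun k =>
    D.add_mem (D_abs_mem D (hfU _)) (D_abs_mem D (hgU _))
  have hv0 : ∀ k x, 0 ≤ v k x := fun k x => by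
    simp [hv]
    positivity
  have hvI : ∀ k, D.integral (v k) = D.integral |fs (k + N)| + D.integral |gs (k + N)| :=
    fun k => D.integral_add (D_abs_mem D (hfU _)) (D_abs_mem D (hgU _))
  have hfsN : Summable fun k => D.integral |fs (k + N)| := (summable_nat_add_iff N).2 hfs
  have hgsN : Summable fun k => D.integral |gs (k + N)| := (summable_nat_add_iff N).2 hgs
  have hvsum : Summable fun k => D.integral (v k) :=
    (hfsN.add hgsN).congr fun k => (hvI k).symm
  -- key pointwise bound for G
  have hle : ∀ x, Summable (fun k => v k x) → G x ≤ ∑' k, v k x := by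
    intro x hx
    have hvx : ∀ k, v k x = |fs (k + N) x| + |gs (k + N) x| := fun k => by simp [hv]
    have hfx' : Summable fun k => |fs (k + N) x| := by
      refine Summable.of_nonneg_of_le (fun k => abs_nonneg _) (fun k => ?_) hx
      rw [hvx]; exact le_add_of_nonneg_right (abs_nonneg _)
    have hgx' : Summable fun k => |gs (k + N) x| := by
      refine Summable.of_nonneg_of_le (fun k => abs_nonneg _) (fun k => ?_) hx
      rw [hvx]; exact le_add_of_nonneg_left (abs_nonneg _)
    have hfx : Summable fun n => |fs n x| := (summable_nat_add_iff N).1 hfx'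
    have hgx : Summable fun n => |gs n x| := (summable_nat_add_iff N).1 hgx'
    have hfsx : Summable fun n => fs n x := hfx.of_abs
    have hgsx : Summable fun n => gs n x := hgx.of_abs
    have hA : ∑' n, gs n x ≤ ∑' n, fs n x := hpt x hfx hgx
    have eqf : ∑ i ∈ Finset.range N, fs i x + ∑' k, fs (k + N) x = ∑' n, fs n x :=
      Summable.sum_add_tsum_nat_add N hfsx
    have eqg : ∑ i ∈ Finset.range N, gs i x + ∑' k, gs (k + N) x = ∑' n, gs n x :=
      Summable.sum_add_tsum_nat_add N hgsx
    have hSfx : Sf x = ∑ i ∈ Finset.range N, fs i x := by simp [hSf]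
    have hSgx : Sg x = ∑ i ∈ Finset.range N, gs i x := by simp [hSg]
    have hbf : ∑' k, fs (k + N) x ≤ ∑' k, |fs (k + N) x| :=
      Summable.tsum_le_tsum (fun k => le_abs_self _) ((summable_nat_add_iff N).2 hfsx) hfx'
    have hbg : ∑' k, -(gs (k + N) x) ≤ ∑' k, |gs (k + N) x| :=
      Summable.tsum_le_tsum (fun k => neg_le_abs _) ((summable_nat_add_iff N).2 hgsx).neg hgx'
    rw [tsum_neg] at hbg
    have hvsumx : ∑' k, v k x = ∑' k, |fs (k + N) x| + ∑' k, |gs (k + N) x| := by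
      rw [← Summable.tsum_add hfx' hgx']
      exact tsum_congr fun k => hvx k
    have hnn : 0 ≤ ∑' k, v k x := tsum_nonneg (fun k => hv0 k x)
    rw [hGx]
    refine max_le ?_ hnn
    rw [hvsumx, hSfx, hSgx]
    linarith
  have hGle : D.integral G ≤ ∑' k, D.integral (v k) :=
    D_integral_le_tsum D G hGU v hvU hv0 hvsum hle
  have htsum_v : ∑' k, D.integral (v k)
      = ∑' k, D.integral |fs (k + N)| + ∑' k, D.integral |gs (k + N)| := by
    rw [← Summable.tsum_add hfsN hgsN]
    exact tsum_congr fun k => hvI k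
  -- Sg ≤ Sf + G pointwise
  have hSgle : D.integral Sg ≤ D.integral Sf + D.integral G := by
    have hpt2 : ∀ x, Sg x ≤ (Sf + G) x := by
      intro x
      have : Sg x - Sf x ≤ G x := by rw [hGx]; exact le_max_left _ _
      simpa [Pi.add_apply] using by linarith
    have := D_integral_mono D hSgU (D.add_mem hSfU hGU) hpt2
    rwa [D.integral_add hSfU hGU] at this
  have hISf : D.integral Sf = ∑ n ∈ Finset.range N, D.integral (fs n) :=
    D_integral_sum D fs hfU N
  have hISg : D.integral Sg = ∑ n ∈ Finset.range N, D.integral (gs n) :=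
    D_integral_sum D gs hgU N
  -- tail integral bounds
  have htailf : |∑' k, D.integral (fs (k + N))| ≤ ∑' k, D.integral |fs (k + N)| := by
    rw [← Real.norm_eq_abs]
    refine le_trans (norm_tsum_le_tsum_norm ?_) ?_
    · refine Summable.of_nonneg_of_le (fun k => norm_nonneg _) (fun k => ?_) hfsN
      simpa [Real.norm_eq_abs] using D_abs_integral_le D (hfU (k + N))
    · refine Summable.tsum_le_tsum (fun k => ?_) ?_ hfsN
      · simpa [Real.norm_eq_abs] using D_abs_integral_le D (hfU (k + N))
      · refine Summable.of_nonneg_of_le (fun k => norm_nonneg _) (fun k => ?_) hfsN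
        simpa [Real.norm_eq_abs] using D_abs_integral_le D (hfU (k + N))
  have htailg : |∑' k, D.integral (gs (k + N))| ≤ ∑' k, D.integral |gs (k + N)| := by
    rw [← Real.norm_eq_abs]
    refine le_trans (norm_tsum_le_tsum_norm ?_) ?_
    · refine Summable.of_nonneg_of_le (fun k => norm_nonneg _) (fun k => ?_) hgsN
      simpa [Real.norm_eq_abs] using D_abs_integral_le D (hgU (k + N))
    · refine Summable.tsum_le_tsum (fun k => ?_) ?_ hgsN
      · simpa [Real.norm_eq_abs] using D_abs_integral_le D (hgU (k + N))
      · refine Summable.of_nonneg_of_le (fun k => norm_nonneg _) (fun k => ?_) hgsN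
        simpa [Real.norm_eq_abs] using D_abs_integral_le D (hgU (k + N))
  have eqIf : ∑ n ∈ Finset.range N, D.integral (fs n) + ∑' k, D.integral (fs (k + N))
      = ∑' n, D.integral (fs n) := Summable.sum_add_tsum_nat_add N hIf
  have eqIg : ∑ n ∈ Finset.range N, D.integral (gs n) + ∑' k, D.integral (gs (k + N))
      = ∑' n, D.integral (gs n) := Summable.sum_add_tsum_nat_add N hIg
  have b1 : ∑' k, D.integral |fs (k + N)| < ε/4 := hN1
  have b2 : ∑' k, D.integral |gs (k + N)| < ε/4 := hN2
  have habsf := abs_le.1 htailf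
  have habsg := abs_le.1 htailg
  rw [htsum_v] at hGle
  linarith

lemma D_rep_tsum_eq {f : X → ℝ} {fs gs : ℕ → X → ℝ}
    (h1 : DaniellSpace.Rep D f fs) (h2 : DaniellSpace.Rep D f gs) :
    ∑' n, D.integral (fs n) = ∑' n, D.integral (gs n) := by
  obtain ⟨hfU, hfs, hfpt⟩ := h1
  obtain ⟨hgU, hgs, hgpt⟩ := h2
  apply le_antisymm
  · exact D_tsum_integral_le D gs fs hgU hfU hgs hfs (fun x hgx hfx => by
      rw [(hfpt x hfx).tsum_eq, (hgpt x hgx).tsum_eq])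
  · exact D_tsum_integral_le D fs gs hfU hgU hfs hgs (fun x hfx hgx => by
      rw [(hfpt x hfx).tsum_eq, (hgpt x hgx).tsum_eq])

end DAux2


set_option maxHeartbeats 2000000 in
/-- If `f ∈ 𝒰*`, then for every `ε > 0` there is a representation `f ≃ ∑ fₙ` with
`∑ ∫|fₙ| ≤ ∫|f| + ε`. -/
theorem daniell_Ustar_rep_almost_minimal {X : Type*} [Nonempty X] (D : DaniellSpace X)
    (f : X → ℝ) (hf : f ∈ D.Ustar) :
    ∀ ε > (0 : ℝ), ∃ fs : ℕ → X → ℝ, D.Rep f fs ∧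
      ∑' n, D.integral |fs n| ≤ D.integralStar |f| + ε := by
  obtain ⟨fs, hfU, hfsum, hfpt⟩ := hf
  intro ε hε
  set S : ℕ → X → ℝ := fun k => ∑ n ∈ Finset.range k, fs n with hSdef
  set hs : ℕ → X → ℝ := fun k => |S (k+1)| - |S k| with hhdef
  have hSU : ∀ k, S k ∈ D.U := fun k => D_sum_mem D fs hfU k
  have hSabsU : ∀ k, |S k| ∈ D.U := fun k => D_abs_mem D (hSU k)
  have hsU : ∀ k, hs k ∈ D.U := fun k => D_sub_mem D (hSabsU (k+1)) (hSabsU k)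
  have hSx : ∀ k x, S k x = ∑ n ∈ Finset.range k, fs n x := fun k x => by simp [hSdef]
  have hsucc : ∀ k x, S (k+1) x = S k x + fs k x := by
    intro k x
    rw [hSx, hSx, Finset.sum_range_succ]
  have habs_le : ∀ k x, |hs k x| ≤ |fs k x| := by
    intro k x
    have h1 : hs k x = |S (k+1) x| - |S k x| := by simp [hhdef]
    rw [h1]
    have := abs_abs_sub_abs_le_abs_sub (S (k+1) x) (S k x)
    have h2 : S (k+1) x - S k x = fs k x := by rw [hsucc]; ring
    rwa [h2] at this
  have habsfn : ∀ k x, |hs k| x = |hs k x| := fun k x => rfl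
  have hIseq : ∀ k, D.integral |hs k| ≤ D.integral |fs k| := by
    intro k
    exact D_integral_mono D (D_abs_mem D (hsU k)) (D_abs_mem D (hfU k))
      (fun x => by simpa using habs_le k x)
  have hInn : ∀ (u : X → ℝ), u ∈ D.U → 0 ≤ D.integral |u| := fun u hu =>
    D.integral_nonneg (D_abs_mem D hu) (fun x => by simp)
  have hssum : Summable fun k => D.integral |hs k| :=
    Summable.of_nonneg_of_le (fun k => hInn _ (hsU k)) hIseq hfsum
  have hIh : Summable fun k => D.integral (hs k) := D_integral_summable D hsU hssum
  have hIf : Summable fun n => D.integral (fs n) := D_integral_summable D hfU hfsum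
  -- the interleaved representation of |f|
  set r : ℕ → X → ℝ := fun n => if Even n then hs (n / 2) + fs (n / 2) else -fs (n / 2)
    with hrdef
  have hre : ∀ k, r (2 * k) = hs k + fs k := by
    intro k
    have h2 : 2 * k / 2 = k := by omega
    simp [hrdef, h2, even_two_mul]
  have hro : ∀ k, r (2 * k + 1) = -fs k := by
    intro k
    have hodd : ¬ Even (2 * k + 1) := by rw [Nat.even_iff]; omega
    have h2 : (2 * k + 1) / 2 = k := by omega
    simp [hrdef, hodd, h2]
  have hrU : ∀ n, r n ∈ D.U := by
    intro n
    by_cases h : Even n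
    · simp only [hrdef, if_pos h]
      exact D.add_mem (hsU _) (hfU _)
    · simp only [hrdef, if_neg h]
      exact D_neg_mem D (hfU _)
  have hrabs_sum : Summable fun n => D.integral |r n| := by
    have heven : Summable fun k => D.integral |r (2 * k)| := by
      refine Summable.of_nonneg_of_le (fun k => hInn _ (hrU _)) (fun k => ?_)
        (hssum.add hfsum)
      rw [hre]
      have hptw : ∀ x, |hs k + fs k| x ≤ (|hs k| + |fs k|) x := fun x => by
        simpa using abs_add_le (hs k x) (fs k x)
      have := D_integral_mono D (D_abs_mem D (D.add_mem (hsU k) (hfU k)))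
        (D.add_mem (D_abs_mem D (hsU k)) (D_abs_mem D (hfU k))) hptw
      rwa [D.integral_add (D_abs_mem D (hsU k)) (D_abs_mem D (hfU k))] at this
    have hodd : Summable fun k => D.integral |r (2 * k + 1)| := by
      refine hfsum.congr fun k => ?_
      rw [hro, abs_neg]
    exact (HasSum.even_add_odd (f := fun n => D.integral |r n|) heven.hasSum hodd.hasSum).summable
  have hrep_r : D.Rep |f| r := by
    refine ⟨hrU, hrabs_sum, ?_⟩
    intro x hx
    have hinj1 : Function.Injective (fun k : ℕ => 2 * k + 1) := fun a b hab => by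
      simp only at hab; omega
    have hinj0 : Function.Injective (fun k : ℕ => 2 * k) := fun a b hab => by
      simp only at hab; omega
    have hxo : Summable fun k => |r (2 * k + 1) x| := hx.comp_injective hinj1
    have hfx : Summable fun k => |fs k x| := by
      refine hxo.congr fun k => ?_
      rw [hro]
      simp
    have hHasfs : HasSum (fun n => fs n x) (f x) := hfpt x hfx
    have hxe : Summable fun k => |r (2 * k) x| := hx.comp_injective hinj0
    have hxe' : Summable fun k => |hs k x + fs k x| := by
      refine hxe.congr fun k => ?_
      rw [hre]
      simp
    have hhx : Summable fun k => |hs k x| := by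
      refine Summable.of_nonneg_of_le (fun k => abs_nonneg _) (fun k => ?_)
        (hxe'.add hfx)
      have := abs_add_le (hs k x + fs k x) (-(fs k x))
      simpa using this
    have hhsumx : Summable fun k => hs k x := hhx.of_abs
    have hps : ∀ K, ∑ k ∈ Finset.range K, hs k x = |S K x| := by
      intro K
      have : ∀ k, hs k x = |S (k+1) x| - |S k x| := fun k => by simp [hhdef]
      calc ∑ k ∈ Finset.range K, hs k x
          = ∑ k ∈ Finset.range K, (|S (k+1) x| - |S k x|) :=
            Finset.sum_congr rfl fun k _ => this k
        _ = |S K x| - |S 0 x| := Finset.sum_range_sub (fun k => |S k x|) K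
        _ = |S K x| := by simp [hSx]
    have htendS : Tendsto (fun K => S K x) atTop (𝓝 (f x)) := by
      have := hHasfs.tendsto_sum_nat
      refine this.congr fun K => (hSx K x).symm
    have habsS : Tendsto (fun K => |S K x|) atTop (𝓝 |f x|) := htendS.abs
    have hLtend : Tendsto (fun K => |S K x|) atTop (𝓝 (∑' k, hs k x)) := by
      have := hhsumx.hasSum.tendsto_sum_nat
      refine this.congr fun K => hps K
    have hL : ∑' k, hs k x = |f x| := tendsto_nhds_unique hLtend habsS
    have heven : HasSum (fun k => r (2 * k) x) ((∑' k, hs k x) + f x) := by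
      have h1 := hhsumx.hasSum.add hHasfs
      have h2 : (fun k => hs k x + fs k x) = fun k => r (2 * k) x := by
        funext k; rw [hre]; simp
      rwa [h2] at h1
    have hodd : HasSum (fun k => r (2 * k + 1) x) (-(f x)) := by
      have h1 := hHasfs.neg
      have h2 : (fun k => -(fs k x)) = fun k => r (2 * k + 1) x := by
        funext k; rw [hro]; simp
      rwa [h2] at h1
    have htot := HasSum.even_add_odd (f := fun n => r n x) heven hodd
    have : (∑' k, hs k x) + f x + -(f x) = |f x| := by rw [hL]; ring
    rwa [this] at htot
  have hex : ∃ gs, D.Rep |f| gs := ⟨r, hrep_r⟩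
  -- compute the starred integral of |f|
  have hstar : D.integralStar |f| = ∑' k, D.integral (hs k) := by
    rw [DaniellSpace.integralStar, dif_pos hex]
    have h1 := D_rep_tsum_eq D hex.choose_spec hrep_r
    rw [h1]
    have hevenI : HasSum (fun k => D.integral (r (2 * k)))
        ((∑' k, D.integral (hs k)) + ∑' n, D.integral (fs n)) := by
      have h2 := hIh.hasSum.add hIf.hasSum
      have h3 : (fun k => D.integral (hs k) + D.integral (fs k))
          = fun k => D.integral (r (2 * k)) := by
        funext k
        rw [hre, D.integral_add (hsU k) (hfU k)]
      rwa [h3] at h2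
    have hoddI : HasSum (fun k => D.integral (r (2 * k + 1))) (-∑' n, D.integral (fs n)) := by
      have h2 := hIf.hasSum.neg
      have h3 : (fun k => -D.integral (fs k)) = fun k => D.integral (r (2 * k + 1)) := by
        funext k
        rw [hro, D_integral_neg D (hfU k)]
      rwa [h3] at h2
    have htot := (HasSum.even_add_odd (f := fun n => D.integral (r n)) hevenI hoddI).tsum_eq
    rw [htot]
    ring
  -- the integrals of |S K| tend to integralStar |f|
  have hIS : Tendsto (fun K => D.integral |S K|) atTop (𝓝 (D.integralStar |f|)) := by
    rw [hstar]
    have hps : ∀ K, ∑ k ∈ Finset.range K, D.integral (hs k) = D.integral |S K| := by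
      intro K
      rw [← D_integral_sum D hs hsU K]
      congr 1
      calc ∑ k ∈ Finset.range K, hs k
          = ∑ k ∈ Finset.range K, (|S (k+1)| - |S k|) := rfl
        _ = |S K| - |S 0| := Finset.sum_range_sub (fun k => |S k|) K
        _ = |S K| := by
            have : S 0 = 0 := by simp [hSdef]
            rw [this]; simp
    have := hIh.hasSum.tendsto_sum_nat
    refine this.congr fun K => hps K
  -- choose a cutoff
  have htail : Tendsto (fun N => ∑' k, D.integral |fs (k + N)|) atTop (𝓝 0) :=
    tendsto_sum_nat_add fun n => D.integral |fs n|
  have h1 : ∀ᶠ N in atTop, D.integral |S N| < D.integralStar |f| + ε/2 :=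
    hIS.eventually_lt_const (by linarith)
  have h2 : ∀ᶠ N in atTop, ∑' k, D.integral |fs (k + N)| < ε/2 :=
    htail.eventually_lt_const (by linarith)
  obtain ⟨N, hN1, hN2⟩ := (h1.and h2).exists
  -- the desired representation
  set gs : ℕ → X → ℝ := fun n => Nat.casesOn n (S N) (fun k => fs (k + N)) with hgdef
  have hg0 : gs 0 = S N := rfl
  have hgs1 : ∀ k, gs (k + 1) = fs (k + N) := fun k => rfl
  have hgU : ∀ n, gs n ∈ D.U := by
    intro n
    cases n with
    | zero => exact hSU N
    | succ k => exact hfU (k + N)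
  have hgsum : Summable fun n => D.integral |gs n| := by
    have hshift : Summable fun k => D.integral |gs (k + 1)| := by
      refine ((summable_nat_add_iff N).2 hfsum).congr fun k => ?_
      rw [hgs1]
    exact (summable_nat_add_iff 1).1 hshift
  have hgpt : ∀ x, (Summable fun n => |gs n x|) → HasSum (fun n => gs n x) (f x) := by
    intro x hx
    have hx1 : Summable fun k => |gs (k + 1) x| := (summable_nat_add_iff 1).2 hx
    have hx2 : Summable fun k => |fs (k + N) x| := by
      refine hx1.congr fun k => ?_
      rw [hgs1]
    have hfx : Summable fun n => |fs n x| := (summable_nat_add_iff N).1 hx2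
    have hHas : HasSum (fun n => fs n x) (f x) := hfpt x hfx
    have hSNx : S N x = ∑ i ∈ Finset.range N, fs i x := hSx N x
    have hval : (f x - S N x) + ∑ i ∈ Finset.range N, fs i x = f x := by
      rw [← hSNx]; ring
    have hHasTail : HasSum (fun k => fs (k + N) x) (f x - S N x) :=
      (hasSum_nat_add_iff N).2 (by rw [hval]; exact hHas)
    have h3 : HasSum (fun k => gs (k + 1) x) (f x - S N x) := by
      have h4 : (fun k => fs (k + N) x) = fun k => gs (k + 1) x := by
        funext k; rw [hgs1]
      rwa [h4] at hHasTail
    have h5 := (hasSum_nat_add_iff (f := fun n => gs n x) 1).1 h3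
    have h6 : f x - S N x + ∑ i ∈ Finset.range 1, gs i x = f x := by
      rw [Finset.sum_range_one, hg0]; ring
    rwa [h6] at h5
  refine ⟨gs, ⟨hgU, hgsum, hgpt⟩, ?_⟩
  have hsplit : ∑ i ∈ Finset.range 1, D.integral |gs i| + ∑' k, D.integral |gs (k + 1)|
      = ∑' n, D.integral |gs n| := Summable.sum_add_tsum_nat_add 1 hgsum
  have htail_eq : ∑' k, D.integral |gs (k + 1)| = ∑' k, D.integral |fs (k + N)| :=
    tsum_congr fun k => by rw [hgs1]
  rw [← hsplit, htail_eq, Finset.sum_range_one, hg0]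
  linarith
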